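/- Let N be a positive natural number, let n ≥ 2 be a natural number, and let B be an N×N real matrix with nonnegative entries such that every row sum of B is at most n−1, and let 0 ≤ λ < 1/(n−1). Then the matrix I − λ·B is invertible, the unique solution a* of a = 𝟙 + λ·B·a equals (I − λ·B)⁻¹·𝟙, and moreover the series ∑_{s=0}^∞ λ^s·B^s·𝟙 converges (in ℝ^N) with a* = ∑_{s=0}^∞ λ^s·B^s·𝟙. In particular, each component of the equilibrium is the sum over s of λ^s times the corresponding entry of B^s·𝟙 (the expected discounted number of walks of length s). -/

import Mathlib

attribute [local instance] Matrix.linftyOpNormedRing Matrix.linftyOpNormedAlgebra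

/-- Under the same hypotheses (`B` nonnegative with row sums at most `n-1`,
`0 ≤ λ < 1/(n-1)`), the matrix `I - λ • B` is invertible, the unique solution of
`a = 𝟙 + λ • B.mulVec a` is `(I - λ • B)⁻¹ ⬝ 𝟙`, and the Neumann series
`∑ₛ λ^s • (B^s).mulVec 𝟙` converges to it. -/
theorem stmt_2 (N n : ℕ) (hN : 0 < N) (hn : 2 ≤ n)
    (B : Matrix (Fin N) (Fin N) ℝ)
    (hBpos : ∀ i j, 0 ≤ B i j)
    (hBrow : ∀ i, ∑ j, B i j ≤ (n : ℝ) - 1)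
    (lam : ℝ) (hlam0 : 0 ≤ lam) (hlam1 : lam < 1 / ((n : ℝ) - 1)) :
    IsUnit ((1 : Matrix (Fin N) (Fin N) ℝ) - lam • B) ∧
    (((1 : Matrix (Fin N) (Fin N) ℝ) - lam • B)⁻¹.mulVec (fun _ => (1 : ℝ)) =
        (fun _ => (1 : ℝ)) + lam • B.mulVec
          (((1 : Matrix (Fin N) (Fin N) ℝ) - lam • B)⁻¹.mulVec (fun _ => (1 : ℝ)))) ∧
    (∀ a : Fin N → ℝ, a = (fun _ => (1 : ℝ)) + lam • B.mulVec a →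
        a = ((1 : Matrix (Fin N) (Fin N) ℝ) - lam • B)⁻¹.mulVec (fun _ => (1 : ℝ))) ∧
    HasSum (fun s : ℕ => lam ^ s • (B ^ s).mulVec (fun _ => (1 : ℝ)))
      (((1 : Matrix (Fin N) (Fin N) ℝ) - lam • B)⁻¹.mulVec (fun _ => (1 : ℝ))) := by
  have hn1 : (0 : ℝ) < (n : ℝ) - 1 := by
    have : (2 : ℝ) ≤ (n : ℝ) := by exact_mod_cast hn
    linarith
  have hlam : lam * ((n : ℝ) - 1) < 1 := (lt_div_iff₀ hn1).1 hlam1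
  -- norm bound
  have hnorm : ‖lam • B‖ < 1 := by
    rw [Matrix.linfty_opNorm_def]
    have : ∀ i : Fin N, (∑ j, ‖(lam • B) i j‖₊ : NNReal) < 1 := by
      intro i
      rw [← NNReal.coe_lt_coe]
      push_cast
      have : (∑ j, ‖(lam • B) i j‖) = lam * ∑ j, B i j := by
        rw [Finset.mul_sum]
        refine Finset.sum_congr rfl fun j _ => ?_
        simp only [Matrix.smul_apply, smul_eq_mul, Real.norm_eq_abs]
        rw [abs_of_nonneg (mul_nonneg hlam0 (hBpos i j))]
      rw [this]
      calc lam * ∑ j, B i j ≤ lam * ((n : ℝ) - 1) :=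
            mul_le_mul_of_nonneg_left (hBrow i) hlam0
        _ < 1 := hlam
    have hsup : (Finset.univ.sup fun i : Fin N => ∑ j, ‖(lam • B) i j‖₊) < 1 :=
      Finset.sup_lt_iff (by simp : (⊥ : NNReal) < 1) |>.2 fun i _ => this i
    exact_mod_cast hsup
  have hunit : IsUnit ((1 : Matrix (Fin N) (Fin N) ℝ) - lam • B) :=
    isUnit_one_sub_of_norm_lt_one hnorm
  set A : Matrix (Fin N) (Fin N) ℝ := (1 : Matrix (Fin N) (Fin N) ℝ) - lam • B with hA
  have hdet : IsUnit A.det := (Matrix.isUnit_iff_isUnit_det A).1 hunit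
  have hAinv : A * A⁻¹ = 1 := Matrix.mul_nonsing_inv A hdet
  have hinvA : A⁻¹ * A = 1 := Matrix.nonsing_inv_mul A hdet
  -- key equation: for any vector v, A.mulVec (A⁻¹.mulVec v) = v
  have key : ∀ v : Fin N → ℝ, A.mulVec (A⁻¹.mulVec v) = v := by
    intro v
    rw [Matrix.mulVec_mulVec, hAinv, Matrix.one_mulVec]
  have expand : ∀ w : Fin N → ℝ, A.mulVec w = w - lam • B.mulVec w := by
    intro w
    rw [hA, Matrix.sub_mulVec, Matrix.one_mulVec, Matrix.smul_mulVec]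
  refine ⟨hunit, ?_, ?_, ?_⟩
  · have h1 := key (fun _ => (1 : ℝ))
    rw [expand] at h1
    exact eq_add_of_sub_eq h1
  · intro a ha
    have h2 : A.mulVec a = fun _ => (1 : ℝ) := by
      rw [expand]
      nth_rewrite 1 [ha]
      abel
    have := congrArg (A⁻¹.mulVec ·) h2
    simpa [Matrix.mulVec_mulVec, hinvA, Matrix.one_mulVec] using this
  · -- Neumann series
    have hsum : HasSum (fun s : ℕ => (lam • B) ^ s) (Ring.inverse A) :=
      hasSum_geom_series_inverse (lam • B) hnorm
    rw [← Matrix.nonsing_inv_eq_ringInverse] at hsum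
    -- map through the continuous linear map M ↦ M.mulVec 𝟙
    let L : Matrix (Fin N) (Fin N) ℝ →ₗ[ℝ] (Fin N → ℝ) :=
      { toFun := fun M => M.mulVec (fun _ => (1 : ℝ))
        map_add' := fun M M' => Matrix.add_mulVec M M' _
        map_smul' := fun c M => Matrix.smul_mulVec c M _ }
    have hLc : Continuous L := L.continuous_of_finiteDimensional
    have := hsum.map L hLc
    convert this using 2 with s
    show lam ^ s • (B ^ s).mulVec (fun _ => (1 : ℝ)) = ((lam • B) ^ s).mulVec _
    rw [smul_pow, Matrix.smul_mulVec]
    rfl
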